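/- Let H be a Hilbert space, φ : H → ℝ Fréchet differentiable and λ-convex, τ > 0 with λ/2 + 1/τ > 0, and suppose X_{n+1} minimizes ξ ↦ (1/2)(φ(ξ) + ⟨∇φ(X_n), ξ⟩) + (1/(2τ))‖ξ − X_n‖² (so X_{n+1} = X_n − (τ/2)(∇φ(X_{n+1}) + ∇φ(X_n))). Then for every ξ ∈ H: (1/(2τ))(‖ξ − X_{n+1}‖² − ‖ξ − X_n‖²) + (λ/4)(‖ξ − X_n‖² + ‖ξ − X_{n+1}‖²) ≤ φ(ξ) − φ(X_{n+1}) + (τ/4)(‖∇φ(X_n)‖² − ‖∇φ(X_{n+1})‖²) − (1/(2τ) + λ/4)‖X_n − X_{n+1}‖². -/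

import Mathlib

open RealInnerProductSpace

lemma tangent_ineq {H : Type*} [NormedAddCommGroup H] [InnerProductSpace ℝ H] [CompleteSpace H]
    (lam : ℝ) (φ : H → ℝ) (g : H → H) (hg : ∀ x, HasGradientAt φ (g x) x)
    (hconv : ∀ x y : H, ∀ t ∈ Set.Icc (0:ℝ) 1,
      φ ((1 - t) • x + t • y) ≤
        (1 - t) * φ x + t * φ y - (lam / 2) * t * (1 - t) * ‖x - y‖ ^ 2)
    (x y : H) : φ x + ⟪g x, y - x⟫ + (lam / 2) * ‖x - y‖ ^ 2 ≤ φ y := by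
  set f : ℝ → ℝ := fun t => φ (x + t • (y - x)) with hf
  have hc : HasDerivAt (fun t : ℝ => x + t • (y - x)) (y - x) 0 := by
    simpa using ((hasDerivAt_id (0:ℝ)).smul_const (y - x)).const_add x
  have hd : HasDerivAt f ⟪g x, y - x⟫ 0 := by
    have h1 := (hg x).hasFDerivAt
    rw [show x = x + (0:ℝ) • (y - x) by simp] at h1
    have := h1.comp_hasDerivAt 0 hc
    simpa [f, Function.comp_def] using this
  have hslope : Filter.Tendsto (slope f 0) (nhdsWithin 0 (Set.Ioi 0)) (nhds ⟪g x, y - x⟫) :=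
    (hasDerivAt_iff_tendsto_slope.mp hd).mono_left
      (nhdsWithin_mono _ (fun t ht => by simpa using ne_of_gt ht))
  have hbound : ∀ᶠ t in nhdsWithin (0:ℝ) (Set.Ioi 0),
      slope f 0 t ≤ φ y - φ x - (lam / 2) * (1 - t) * ‖x - y‖ ^ 2 := by
    filter_upwards [Ioc_mem_nhdsGT_of_mem (by norm_num : (0:ℝ) ∈ Set.Ico (0:ℝ) 1)] with t ht
    have ht0 : 0 < t := ht.1
    have hcv := hconv x y t ⟨le_of_lt ht0, ht.2⟩
    have heq : (1 - t) • x + t • y = x + t • (y - x) := by module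
    rw [heq] at hcv
    have hft : f t - f 0 ≤ t * (φ y - φ x - (lam / 2) * (1 - t) * ‖x - y‖ ^ 2) := by
      simp only [f, zero_smul, add_zero]
      nlinarith [hcv]
    have : slope f 0 t = (f t - f 0) / t := by
      rw [slope_def_field]; ring_nf
    rw [this, div_le_iff₀ ht0]
    linarith [hft]
  have hlim : Filter.Tendsto (fun t : ℝ => φ y - φ x - (lam / 2) * (1 - t) * ‖x - y‖ ^ 2)
      (nhdsWithin 0 (Set.Ioi 0)) (nhds (φ y - φ x - (lam / 2) * (1 - 0) * ‖x - y‖ ^ 2)) := by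
    apply Filter.Tendsto.mono_left _ nhdsWithin_le_nhds
    exact (Continuous.tendsto (by continuity) 0)
  have key := le_of_tendsto_of_tendsto hslope hlim hbound
  simp only [sub_zero] at key
  nlinarith [key]

theorem discrete_EVI
    {H : Type*} [NormedAddCommGroup H] [InnerProductSpace ℝ H] [CompleteSpace H]
    (lam τ : ℝ) (hτ : 0 < τ) (hc : lam / 2 + 1 / τ > 0)
    (φ : H → ℝ) (g : H → H) (hg : ∀ x, HasGradientAt φ (g x) x)
    (hconv : ∀ x y : H, ∀ t ∈ Set.Icc (0:ℝ) 1,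
      φ ((1 - t) • x + t • y) ≤
        (1 - t) * φ x + t * φ y - (lam / 2) * t * (1 - t) * ‖x - y‖ ^ 2)
    (X₀ X₁ : H)
    (hmin : ∀ ξ : H,
      (1 / 2) * (φ X₁ + ⟪g X₀, X₁⟫) + (1 / (2 * τ)) * ‖X₁ - X₀‖ ^ 2 ≤
      (1 / 2) * (φ ξ + ⟪g X₀, ξ⟫) + (1 / (2 * τ)) * ‖ξ - X₀‖ ^ 2)
    (himp : X₁ = X₀ - (τ / 2) • (g X₁ + g X₀)) :
    ∀ ξ : H,
      (1 / (2 * τ)) * (‖ξ - X₁‖ ^ 2 - ‖ξ - X₀‖ ^ 2) +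
        (lam / 4) * (‖ξ - X₀‖ ^ 2 + ‖ξ - X₁‖ ^ 2) ≤
      φ ξ - φ X₁ + (τ / 4) * (‖g X₀‖ ^ 2 - ‖g X₁‖ ^ 2) -
        (1 / (2 * τ) + lam / 4) * ‖X₀ - X₁‖ ^ 2 := by
  intro ξ
  have hA := tangent_ineq lam φ g hg hconv X₀ ξ
  have hB := tangent_ineq lam φ g hg hconv X₁ ξ
  have hC := tangent_ineq lam φ g hg hconv X₁ X₀
  rw [norm_sub_rev X₀ ξ] at hA
  rw [norm_sub_rev X₁ ξ] at hB
  rw [norm_sub_rev X₁ X₀] at hC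
  set r := g X₁ with hr
  set s := g X₀ with hs
  have hw : X₀ - X₁ = (τ / 2) • (r + s) := by
    rw [himp]; abel
  have e1 : ‖ξ - X₁‖ ^ 2 = ‖ξ - X₀‖ ^ 2 + 2 * ⟪ξ - X₀, X₀ - X₁⟫ + ‖X₀ - X₁‖ ^ 2 := by
    rw [show ξ - X₁ = (ξ - X₀) + (X₀ - X₁) by abel, norm_add_sq_real]
  have e2 : ⟪r, ξ - X₁⟫ = ⟪r, ξ - X₀⟫ + ⟪r, X₀ - X₁⟫ := by
    rw [← inner_add_right]; congr 1; abel
  have e3 : ⟪r, X₀ - X₁⟫ = (τ / 2) * (‖r‖ ^ 2 + ⟪r, s⟫) := by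
    rw [hw, real_inner_smul_right, inner_add_right, real_inner_self_eq_norm_sq]
  have e4 : ⟪ξ - X₀, X₀ - X₁⟫ = (τ / 2) * (⟪r, ξ - X₀⟫ + ⟪s, ξ - X₀⟫) := by
    rw [hw, real_inner_smul_right, inner_add_right,
      real_inner_comm (ξ - X₀) r, real_inner_comm (ξ - X₀) s]
  have e5 : ‖X₀ - X₁‖ ^ 2 = (τ / 2) ^ 2 * (‖r‖ ^ 2 + 2 * ⟪r, s⟫ + ‖s‖ ^ 2) := by
    rw [hw, norm_smul, Real.norm_eq_abs, abs_of_pos (by positivity : (0:ℝ) < τ / 2),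
      mul_pow, norm_add_sq_real]
  have e6 : (1 / (2 * τ)) * (‖ξ - X₁‖ ^ 2 - ‖ξ - X₀‖ ^ 2) + (1 / (2 * τ)) * ‖X₀ - X₁‖ ^ 2
      = (1 / 2) * (⟪r, ξ - X₀⟫ + ⟪s, ξ - X₀⟫)
        + (τ / 4) * (‖r‖ ^ 2 + 2 * ⟪r, s⟫ + ‖s‖ ^ 2) := by
    rw [e1, e4, e5]; field_simp; ring
  linarith [hA, hB, hC, e2, e3, e5, e6]
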